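/- Let d be a positive even integer, let σ = (σ₁,σ₂) ∈ ℤ², and set s = (σ₁, σ₂ + d/2). Let λ and μ be bipartitions, and let Λ and Λ' be the charged symbols of λ and μ with charge σ. If λ ⪯_s μ in the Dunkl–Griffeth order (defined with respect to d), then Λ ⊲ Λ' or Λ ≡ Λ' (i.e. ϖ_Λ = ϖ_{Λ'}, or ϖ_Λ ≠ ϖ_{Λ'} and all partial sums of ϖ_Λ are bounded by those of ϖ_{Λ'}). -/

import Mathlib

open scoped Classical

noncomputable section

/-- A partition: an antitone, eventually zero sequence of natural numbers.
`parts k` is the `(k+1)`-st part `λ_{k+1}`. -/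
structure NPartition where
  parts : ℕ → ℕ
  antitone' : Antitone parts
  exists_zero : ∃ N, parts N = 0

namespace NPartition

lemma sorted_getD_antitone {l : List ℕ} (h : l.Pairwise (· ≥ ·)) :
    Antitone (fun k => l.getD k 0) := by
  intro i j hij
  simp only
  rcases lt_or_ge j l.length with hj | hj
  · have hi : i < l.length := lt_of_le_of_lt hij hj
    rw [List.getD_eq_getElem l 0 hj, List.getD_eq_getElem l 0 hi]
    rcases eq_or_lt_of_le hij with rfl | hlt
    · exact le_rfl
    · exact List.pairwise_iff_getElem.mp h i j hi hj hlt
  · rw [List.getD_eq_default l 0 hj]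
    exact Nat.zero_le _

/-- The partition whose multiset of (nonzero) parts is the multiset of nonzero
elements of `m`. -/
def ofMul (m : Multiset ℕ) : NPartition where
  parts := fun k => ((m.sort (· ≤ ·)).reverse).getD k 0
  antitone' := by
    apply sorted_getD_antitone
    rw [List.pairwise_reverse]
    exact Multiset.pairwise_sort (r := (· ≤ ·)) (s := m)
  exists_zero := ⟨((m.sort (· ≤ ·)).reverse).length, List.getD_eq_default _ _ le_rfl⟩

/-- The size `|λ|` of a partition: the sum of its parts. -/
def size (p : NPartition) : ℕ := ∑ i ∈ Finset.range (Nat.find p.exists_zero), p.parts i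

lemma finite_gt (p : NPartition) (k : ℕ) : {i : ℕ | k < p.parts i}.Finite := by
  obtain ⟨N, hN⟩ := p.exists_zero
  apply (Set.finite_Iio N).subset
  intro i hi
  simp only [Set.mem_setOf_eq] at hi
  by_contra hc
  simp only [Set.mem_Iio, not_lt] at hc
  have := p.antitone' hc
  omega

/-- The conjugate (transpose) partition. -/
def conj (p : NPartition) : NPartition where
  parts := fun k => {i : ℕ | k < p.parts i}.ncard
  antitone' := fun a b hab =>
    Set.ncard_le_ncard (fun i hi => lt_of_le_of_lt hab hi) (p.finite_gt a)
  exists_zero := by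
    refine ⟨p.parts 0, ?_⟩
    have h : {i : ℕ | p.parts 0 < p.parts i} = ∅ := by
      ext i
      simp only [Set.mem_setOf_eq, Set.mem_empty_iff_false, iff_false, not_lt]
      exact p.antitone' (Nat.zero_le i)
    try simp only []
    rw [h, Set.ncard_empty]

/-- The 180°-rotation of the complement of `p` inside the rectangle with
`rows` rows of length `c`: the partition `(c - p_rows, c - p_{rows-1}, …, c - p₁)`. -/
def rotCompl (c rows : ℕ) (p : NPartition) : NPartition where
  parts := fun k => if k < rows then c - p.parts (rows - 1 - k) else 0
  antitone' := by
    intro a b hab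
    by_cases hb : b < rows
    · have ha : a < rows := lt_of_le_of_lt hab hb
      simp only [if_pos hb, if_pos ha]
      exact Nat.sub_le_sub_left (p.antitone' (by omega)) c
    · simp only [if_neg hb]
      exact Nat.zero_le _
  exists_zero := ⟨rows, by simp⟩

end NPartition

/-- A bipartition: a pair of partitions. -/
abbrev Bipartition := NPartition × NPartition

/-- The size of a bipartition. -/
def Bipartition.size (l : Bipartition) : ℕ := l.1.size + l.2.size

/-- The bipartition whose components have parts the multisets `a` and `b`. -/
def bip (a b : Multiset ℕ) : Bipartition := (NPartition.ofMul a, NPartition.ofMul b)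

/-- The multiset of parts of the partition `a 1^b` (one part `a`, then `b` parts `1`). -/
def hook (a b : ℕ) : Multiset ℕ := a ::ₘ Multiset.replicate b 1

/-- The charged β-set of a partition, as a sequence:
`betaSet p s i = λ_{i+1} + s - (i+1) + 1`. -/
def betaSet (p : NPartition) (s : ℤ) (i : ℕ) : ℤ := (p.parts i : ℤ) + s - i

/-- The charged symbol of a bipartition with charge `σ`, as a pair of subsets of `ℤ`. -/
def symbolOf (l : Bipartition) (σ : ℤ × ℤ) : Set ℤ × Set ℤ :=
  (Set.range (betaSet l.1 σ.1), Set.range (betaSet l.2 σ.2))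

/-- The charge `σ_t`. -/
def sigmaT (t : ℕ) : ℤ × ℤ :=
  if Even t then ((t : ℤ), -1 - (t : ℤ)) else (-1 - (t : ℤ), (t : ℤ))

/-- The trivial symbol `({0,-1,-2,…},{-1,-2,-3,…})`, the symbol of the empty
bipartition with charge `σ₀ = (0,-1)`. -/
def trivialSymbol : Set ℤ × Set ℤ := ({z : ℤ | z ≤ 0}, {z : ℤ | z ≤ -1})

/-- Removing one `n`-co-hook from the symbol `Λ`, yielding `Λ'`: remove `x+n` from one
row, adjoin `x` to the other row, and exchange the two rows. -/
def CohookStep (n : ℕ) (Λ Λ' : Set ℤ × Set ℤ) : Prop :=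
  (∃ x : ℤ, x + n ∈ Λ.1 ∧ x ∉ Λ.2 ∧ Λ' = (Λ.2 ∪ {x}, Λ.1 \ {x + n})) ∨
  (∃ x : ℤ, x + n ∈ Λ.2 ∧ x ∉ Λ.1 ∧ Λ' = (Λ.2 \ {x + n}, Λ.1 ∪ {x}))

/-- `C` is the `n`-co-core of `Λ`: it is obtained from `Λ` by recursively removing
`n`-co-hooks, and no further `n`-co-hook can be removed. -/
def IsCocore (n : ℕ) (Λ C : Set ℤ × Set ℤ) : Prop :=
  Relation.ReflTransGen (CohookStep n) Λ C ∧ ∀ C', ¬ CohookStep n C C'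

/-- Number of entries of the charged β-set of `p` that are `≥ α` (with multiplicity). -/
def betaCountGE (p : NPartition) (s α : ℤ) : ℕ := Nat.card {i : ℕ // α ≤ betaSet p s i}

/-- Number of entries `≥ α`, with multiplicity, of the multiset union of the two rows
of the symbol of `l` with charge `σ`. -/
def symCountGE (l : Bipartition) (σ : ℤ × ℤ) (α : ℤ) : ℕ :=
  betaCountGE l.1 σ.1 α + betaCountGE l.2 σ.2 α

/-- The composition `ϖ_Λ` of the symbol of `l` with charge `σ`: `comp l σ k` is the
`(k+1)`-st largest entry (with multiplicity) of the multiset union of the two rows. -/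
def comp (l : Bipartition) (σ : ℤ × ℤ) (k : ℕ) : ℤ :=
  sSup {z : ℤ | k + 1 ≤ symCountGE l σ z}

/-- All partial sums of the composition of the symbol `(l,σ)` are bounded by those of
`(m,τ)`. -/
def DomLE (l : Bipartition) (σ : ℤ × ℤ) (m : Bipartition) (τ : ℤ × ℤ) : Prop :=
  ∀ j : ℕ, ∑ k ∈ Finset.range j, comp l σ k ≤ ∑ k ∈ Finset.range j, comp m τ k

/-- Strict dominance `Λ ⊲ Λ'` of symbols: the compositions differ and all partial sums
of the first are bounded by those of the second. -/
def DomLT (l : Bipartition) (σ : ℤ × ℤ) (m : Bipartition) (τ : ℤ × ℤ) : Prop :=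
  comp l σ ≠ comp m τ ∧ DomLE l σ m τ

/-- A box `(x, y, j)` (0-indexed row `x`, 0-indexed column `y`, component `j`:
`j = 0` is the first component, `j = 1` the second). -/
abbrev Box := ℕ × ℕ × Fin 2

/-- The component of a bipartition selected by `j : Fin 2`. -/
def Bipartition.partsOf (l : Bipartition) (j : Fin 2) : NPartition := if j = 0 then l.1 else l.2

/-- Membership of a box in the Young diagram of a bipartition. -/
def MemY (l : Bipartition) (b : Box) : Prop := b.2.1 < (l.partsOf b.2.2).parts b.1

/-- The entry of the charge `σ` corresponding to component `j`. -/
def chargeOf (σ : ℤ × ℤ) (j : Fin 2) : ℤ := if j = 0 then σ.1 else σ.2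

/-- The charged content `co^σ(b) = y - x + σ_j` of a box. -/
def content (σ : ℤ × ℤ) (b : Box) : ℤ := (b.2.1 : ℤ) - (b.1 : ℤ) + chargeOf σ b.2.2

/-- `j(b) ∈ {1,2}`: the component of a box, numbered 1 or 2. -/
def jval (b : Box) : ℕ := (b.2.2 : ℕ) + 1

/-- The counting function of the Dunkl–Griffeth order. -/
def dgCount (l : Bipartition) (s : ℤ × ℤ) (d : ℕ) (α : ℝ) (j : ℕ) : ℕ :=
  Nat.card {b : Box // MemY l b ∧
    (α < (content s b : ℝ) - (jval b : ℝ) * (d : ℝ) / 2 ∨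
      ((content s b : ℝ) - (jval b : ℝ) * (d : ℝ) / 2 = α ∧ jval b ≤ j))}

/-- The Dunkl–Griffeth order `λ ⪯_s μ` (with respect to `d`). -/
def DGLE (l m : Bipartition) (s : ℤ × ℤ) (d : ℕ) : Prop :=
  ∀ (α : ℝ), ∀ j ∈ ({1, 2} : Set ℕ), dgCount l s d α j ≤ dgCount m s d α j

/-- A box of the extended Young diagram: rows are infinite to the left, so the column
coordinate is an integer.  `(x, y, j)` is the box in (0-indexed) row `x`, with integer
column coordinate `y` (`y = 0` is the first column), in component `j`. -/
abbrev ExtBox := ℕ × ℤ × Fin 2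

/-- Membership in the extended Young diagram of a bipartition. -/
def MemExtY (l : Bipartition) (b : ExtBox) : Prop :=
  b.2.1 < ((l.partsOf b.2.2).parts b.1 : ℤ)

/-- The charged content of an extended box. -/
def contentExt (σ : ℤ × ℤ) (b : ExtBox) : ℤ := b.2.1 - (b.1 : ℤ) + chargeOf σ b.2.2

/-- `b` is a removable box of the bipartition `l`. -/
def Removable (l : Bipartition) (b : Box) : Prop :=
  (l.partsOf b.2.2).parts b.1 = b.2.1 + 1 ∧ (l.partsOf b.2.2).parts (b.1 + 1) ≤ b.2.1

/-- `b` is an addable box of the bipartition `l`. -/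
def Addable (l : Bipartition) (b : Box) : Prop :=
  (l.partsOf b.2.2).parts b.1 = b.2.1 ∧
    (b.1 = 0 ∨ b.2.1 + 1 ≤ (l.partsOf b.2.2).parts (b.1 - 1))

/-- The order in which boxes are listed in the `i`-word: increasing charged content,
a component-2 box preceding a component-1 box of equal charged content. -/
def BoxLT (σ : ℤ × ℤ) (b b' : Box) : Prop :=
  content σ b < content σ b' ∨
    (content σ b = content σ b' ∧ b.2.2 = 1 ∧ b'.2.2 = 0)

/-- `L` is the list of boxes underlying the `i`-word of `(l, σ)` with respect to `d`:
it lists, in increasing order, exactly the addable and removable boxes of `l` whose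
charged content is congruent to `i` modulo `d`. -/
def IsIWord (l : Bipartition) (σ : ℤ × ℤ) (d : ℕ) (i : ZMod d) (L : List Box) : Prop :=
  L.Pairwise (BoxLT σ) ∧
    ∀ b : Box, b ∈ L ↔ ((Addable l b ∨ Removable l b) ∧ ((content σ b : ZMod d) = i))

/-- The sign of a box in the `i`-word: `true` (`+`) for addable, `false` (`−`) for
removable boxes. -/
def signOf (l : Bipartition) (b : Box) : Bool := if Addable l b then true else false

/-- One reduction step on words: delete an adjacent pair `−+`. -/
def RedStep (w w' : List Bool) : Prop :=
  ∃ u v : List Bool, w = u ++ false :: true :: v ∧ w' = u ++ v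

/-- `ẽ_i l = 0`: the reduced `i`-word of `(l, σ)` contains no `−`, i.e. the `i`-word
reduces to a word consisting only of `+`'s. -/
def AnnihilatedE (l : Bipartition) (σ : ℤ × ℤ) (d : ℕ) (i : ZMod d) : Prop :=
  ∃ L : List Box, IsIWord l σ d i L ∧
    ∃ a : ℕ, Relation.ReflTransGen RedStep (L.map (signOf l)) (List.replicate a true)

/-- `q` is obtained from the partition `p` by adding one box. -/
def PCovers (p q : NPartition) : Prop :=
  ∃ x : ℕ, q.parts x = p.parts x + 1 ∧ ∀ y : ℕ, y ≠ x → q.parts y = p.parts y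

/-- `m` is obtained from the bipartition `l` by adding one box to its Young diagram. -/
def BipCovers (l m : Bipartition) : Prop :=
  (PCovers l.1 m.1 ∧ m.2 = l.2) ∨ (m.1 = l.1 ∧ PCovers l.2 m.2)

/-- `A(l) = Σ_μ μ`, the sum over all bipartitions obtained from `l` by adding one box,
as an element of the group of `ℤ`-valued functions on bipartitions. -/
def addB (l : Bipartition) : Bipartition → ℤ := fun m => if BipCovers l m then 1 else 0

/-- The projection `π_S` onto the span of the bipartitions lying in `S`. -/
def projS (S : Set Bipartition) (f : Bipartition → ℤ) : Bipartition → ℤ :=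
  fun m => if m ∈ S then f m else 0

/-- The basis element of `ℤ[BP]` corresponding to a bipartition. -/
def deltaB (l : Bipartition) : Bipartition → ℤ := fun m => if m = l then 1 else 0

/-- The bipartitions of `2n` labelling the principal-series unipotent characters in
the principal `Φ_{2n}`-block. -/
def PS (n : ℕ) : Set Bipartition :=
  {l | (∃ i j : ℕ, 0 < i ∧ i < n ∧ j ≤ n ∧
          l = bip (hook (n - i) j) (hook (n - j + 1) (i - 1))) ∨
       (∃ j : ℕ, j < 2 * n ∧ l = bip (hook (2 * n - j) j) 0) ∨
       (∃ i : ℕ, 0 < i ∧ i ≤ 2 * n ∧ l = bip 0 (hook (2 * n - i + 1) (i - 1)))}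

/-- The bipartitions of `2n-2` labelling the `B₂`-series unipotent characters in the
principal `Φ_{2n}`-block: `2^i 1^{j-i-1} . (n-i-1)(n-j)` for `0 ≤ i < j ≤ n`. -/
def LB2 (n : ℕ) : Set Bipartition :=
  {l | ∃ i j : ℕ, i < j ∧ j ≤ n ∧
        l = bip (Multiset.replicate i 2 + Multiset.replicate (j - i - 1) 1)
                {n - i - 1, n - j}}

/-- The bipartitions of `2n-6` labelling the `B₆`-series unipotent characters in the
principal `Φ_{2n}`-block: `(n-i-2)(n-j-1) . 2^{i-1} 1^{j-i-1}` for `0 < i < j < n`. -/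
def LB6 (n : ℕ) : Set Bipartition :=
  {l | ∃ i j : ℕ, 0 < i ∧ i < j ∧ j < n ∧
        l = bip {n - i - 2, n - j - 1}
                (Multiset.replicate (i - 1) 2 + Multiset.replicate (j - i - 1) 1)}

end


section Stmt0Aux
open Finset
namespace Stmt0

lemma betaSet_le (p : NPartition) (c : ℤ) (i : ℕ) :
    betaSet p c i ≤ (p.parts 0 : ℤ) + c - i := by
  have := p.antitone' (Nat.zero_le i)
  unfold betaSet
  omega

lemma rows_bound (p : NPartition) : ∃ N, ∀ x, N ≤ x → p.parts x = 0 := by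
  obtain ⟨N, hN⟩ := p.exists_zero
  exact ⟨N, fun x hx => Nat.le_zero.mp (hN ▸ p.antitone' hx)⟩

lemma betaCountGE_eq_card (p : NPartition) (c u : ℤ) (X : ℕ)
    (hX : ∀ x, X ≤ x → betaSet p c x < u) :
    betaCountGE p c u = ((range X).filter (fun x => u ≤ betaSet p c x)).card := by
  have hset : {i : ℕ | u ≤ betaSet p c i}
      = ↑((range X).filter (fun x => u ≤ betaSet p c x)) := by
    ext i
    simp only [Set.mem_setOf_eq, coe_filter, mem_range, Set.mem_setOf_eq]
    constructor
    · intro hi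
      refine ⟨?_, hi⟩
      by_contra hc
      exact absurd hi (not_le.mpr (hX i (by omega)))
    · tauto
  calc betaCountGE p c u = Nat.card {i : ℕ | u ≤ betaSet p c i} := rfl
    _ = _ := by rw [hset, Nat.card_coe_set_eq, Set.ncard_coe_finset]

lemma exists_X (p : NPartition) (c u : ℤ) :
    ∃ X : ℕ, ∀ v, u ≤ v → ∀ x, X ≤ x → betaSet p c x < v := by
  refine ⟨((p.parts 0 : ℤ) + c - u + 1).toNat, fun v hv x hx => ?_⟩
  have h1 := betaSet_le p c x
  omega

lemma betaCountGE_antitone (p : NPartition) (c : ℤ) {u v : ℤ} (huv : u ≤ v) :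
    betaCountGE p c v ≤ betaCountGE p c u := by
  obtain ⟨X, hX⟩ := exists_X p c u
  rw [betaCountGE_eq_card p c u X (hX u le_rfl),
    betaCountGE_eq_card p c v X (hX v huv)]
  apply card_le_card
  intro x hx
  rw [mem_filter] at hx ⊢
  exact ⟨hx.1, le_trans huv hx.2⟩

lemma symCountGE_antitone (l : Bipartition) (σ : ℤ × ℤ) {u v : ℤ} (huv : u ≤ v) :
    symCountGE l σ v ≤ symCountGE l σ u :=
  Nat.add_le_add (betaCountGE_antitone _ _ huv) (betaCountGE_antitone _ _ huv)

lemma betaCountGE_lower (p : NPartition) (c : ℤ) (k : ℕ) :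
    k + 1 ≤ betaCountGE p c (c - k) := by
  obtain ⟨X, hX⟩ := exists_X p c (c - k)
  rw [betaCountGE_eq_card p c (c - k) (max X (k+1))
    (fun x hx => hX _ le_rfl x (le_trans (le_max_left _ _) hx))]
  have hsub : range (k+1) ⊆ (range (max X (k+1))).filter (fun x => c - k ≤ betaSet p c x) := by
    intro x hx
    rw [mem_range] at hx
    rw [mem_filter, mem_range]
    refine ⟨by omega, ?_⟩
    unfold betaSet
    omega
  calc k + 1 = (range (k+1)).card := (card_range _).symm
    _ ≤ _ := card_le_card hsub

lemma le_of_betaCountGE_pos (p : NPartition) (c u : ℤ) (h : betaCountGE p c u ≠ 0) :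
    u ≤ (p.parts 0 : ℤ) + c := by
  by_contra hc
  obtain ⟨X, hX⟩ := exists_X p c u
  rw [betaCountGE_eq_card p c u X (hX u le_rfl)] at h
  apply h
  rw [card_eq_zero, filter_eq_empty_iff]
  intro x _
  have := betaSet_le p c x
  omega

lemma le_comp_iff (l : Bipartition) (σ : ℤ × ℤ) (k : ℕ) (z : ℤ) :
    z ≤ comp l σ k ↔ k + 1 ≤ symCountGE l σ z := by
  set S : Set ℤ := {z : ℤ | k + 1 ≤ symCountGE l σ z} with hS
  have hne : S.Nonempty := by
    refine ⟨σ.1 - k, ?_⟩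
    have := betaCountGE_lower l.1 σ.1 k
    simp only [hS, Set.mem_setOf_eq, symCountGE]
    omega
  have hbdd : BddAbove S := by
    refine ⟨max ((l.1.parts 0 : ℤ) + σ.1) ((l.2.parts 0 : ℤ) + σ.2), fun u hu => ?_⟩
    simp only [hS, Set.mem_setOf_eq, symCountGE] at hu
    rcases Nat.eq_zero_or_pos (betaCountGE l.1 σ.1 u) with h1 | h1
    · have h2 : betaCountGE l.2 σ.2 u ≠ 0 := by omega
      exact le_trans (le_of_betaCountGE_pos _ _ _ h2) (le_max_right _ _)
    · exact le_trans (le_of_betaCountGE_pos _ _ _ (by omega)) (le_max_left _ _)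
  have hmem : comp l σ k ∈ S := Int.csSup_mem hne hbdd
  constructor
  · intro hz
    simp only [hS, Set.mem_setOf_eq] at hmem
    exact le_trans hmem (symCountGE_antitone l σ hz)
  · intro hz
    exact le_csSup hbdd hz

lemma comp_antitone (l : Bipartition) (σ : ℤ × ℤ) : Antitone (comp l σ) := by
  intro j k hjk
  rw [le_comp_iff]
  have := (le_comp_iff l σ k (comp l σ k)).1 le_rfl
  omega

lemma comp_le_U (l : Bipartition) (σ : ℤ × ℤ) (k : ℕ) (U : ℤ)
    (hU1 : (l.1.parts 0 : ℤ) + σ.1 ≤ U) (hU2 : (l.2.parts 0 : ℤ) + σ.2 ≤ U) :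
    comp l σ k ≤ U := by
  have h := (le_comp_iff l σ k (comp l σ k)).1 le_rfl
  simp only [symCountGE] at h
  rcases Nat.eq_zero_or_pos (betaCountGE l.1 σ.1 (comp l σ k)) with h1 | h1
  · have h2 := le_of_betaCountGE_pos l.2 σ.2 (comp l σ k) (by omega)
    omega
  · have h2 := le_of_betaCountGE_pos l.1 σ.1 (comp l σ k) (by omega)
    omega

lemma comp_count (l : Bipartition) (σ : ℤ × ℤ) (u : ℤ) (K : ℕ)
    (hK : symCountGE l σ u ≤ K) :
    ((range K).filter (fun k => u ≤ comp l σ k)).card = symCountGE l σ u := by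
  have : (range K).filter (fun k => u ≤ comp l σ k) = range (symCountGE l σ u) := by
    ext k
    simp only [mem_filter, mem_range, le_comp_iff]
    omega
  rw [this, card_range]

lemma swap_sum (f : ℕ → ℤ) (A : Finset ℕ) (t U : ℤ) (hU : ∀ k ∈ A, f k ≤ U) :
    ∑ k ∈ A, (f k - t).toNat = ∑ u ∈ Finset.Ioc t U, (A.filter (fun k => u ≤ f k)).card := by
  have h1 : ∀ k ∈ A, (f k - t).toNat = ((Finset.Ioc t U).filter (fun u => u ≤ f k)).card := by
    intro k hk
    have : (Finset.Ioc t U).filter (fun u => u ≤ f k) = Finset.Ioc t (f k) := by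
      ext u
      simp only [mem_filter, mem_Ioc]
      have := hU k hk
      constructor
      · rintro ⟨⟨ha, _⟩, hb⟩; exact ⟨ha, hb⟩
      · rintro ⟨ha, hb⟩; exact ⟨⟨ha, le_trans hb this⟩, hb⟩
    rw [this, Int.card_Ioc]
  rw [Finset.sum_congr rfl h1]
  simp only [Finset.card_filter]
  rw [Finset.sum_comm]

lemma rowCard (p : NPartition) (c t : ℤ) (x Y : ℕ) (hY : p.parts 0 ≤ Y) :
    (∑ y ∈ range Y, if y < p.parts x ∧ t ≤ (y : ℤ) - (x : ℤ) + c then 1 else 0)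
      = p.parts x - (t + (x : ℤ) - c).toNat := by
  rw [← Finset.card_filter]
  have hpx : p.parts x ≤ Y := le_trans (p.antitone' (Nat.zero_le x)) hY
  have : (range Y).filter (fun y => y < p.parts x ∧ t ≤ (y : ℤ) - (x : ℤ) + c)
      = Finset.Ico ((t + (x : ℤ) - c).toNat) (p.parts x) := by
    ext y
    simp only [mem_filter, mem_range, mem_Ico]
    omega
  rw [this, Nat.card_Ico]

lemma boxCard (l : Bipartition) (σ : ℤ × ℤ) (t : ℤ) (X Y : ℕ)
    (hX1 : ∀ x, X ≤ x → l.1.parts x = 0) (hX2 : ∀ x, X ≤ x → l.2.parts x = 0)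
    (hY1 : l.1.parts 0 ≤ Y) (hY2 : l.2.parts 0 ≤ Y) :
    Nat.card {b : Box // MemY l b ∧ t ≤ content σ b}
      = (∑ x ∈ range X, (l.1.parts x - (t + (x : ℤ) - σ.1).toNat))
        + ∑ x ∈ range X, (l.2.parts x - (t + (x : ℤ) - σ.2).toNat) := by
  have hmem1 : ∀ x y : ℕ, (MemY l (x, y, (0 : Fin 2)) ∧ t ≤ content σ (x, y, (0 : Fin 2)))
      ↔ (y < l.1.parts x ∧ t ≤ (y : ℤ) - (x : ℤ) + σ.1) := by
    intro x y
    simp [MemY, content, chargeOf, Bipartition.partsOf]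
  have hmem2 : ∀ x y : ℕ, (MemY l (x, y, (1 : Fin 2)) ∧ t ≤ content σ (x, y, (1 : Fin 2)))
      ↔ (y < l.2.parts x ∧ t ≤ (y : ℤ) - (x : ℤ) + σ.2) := by
    intro x y
    simp [MemY, content, chargeOf, Bipartition.partsOf]
  set F : Finset Box :=
    (range X ×ˢ range Y ×ˢ (univ : Finset (Fin 2))).filter
      (fun b => MemY l b ∧ t ≤ content σ b) with hF
  have hset : {b : Box | MemY l b ∧ t ≤ content σ b} = ↑F := by
    ext b
    obtain ⟨x, y, j⟩ := b
    simp only [Set.mem_setOf_eq, hF, coe_filter, mem_product, mem_range, mem_univ,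
      and_true, Set.mem_setOf_eq]
    constructor
    · intro hb
      refine ⟨⟨?_, ?_⟩, hb⟩
      · by_contra hc
        have hb1 := hb.1
        unfold MemY Bipartition.partsOf at hb1
        fin_cases j <;> simp at hb1
        · have := hX1 x (by omega); omega
        · have := hX2 x (by omega); omega
      · have hb1 := hb.1
        unfold MemY Bipartition.partsOf at hb1
        fin_cases j <;> simp at hb1
        · have := l.1.antitone' (Nat.zero_le x); omega
        · have := l.2.antitone' (Nat.zero_le x); omega
    · tauto
  have hcard : Nat.card {b : Box // MemY l b ∧ t ≤ content σ b} = F.card := by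
    calc Nat.card {b : Box // MemY l b ∧ t ≤ content σ b}
        = Nat.card {b : Box | MemY l b ∧ t ≤ content σ b} := rfl
      _ = F.card := by rw [hset, Nat.card_coe_set_eq, Set.ncard_coe_finset]
  rw [hcard, hF, Finset.card_filter, Finset.sum_product]
  have hrow : ∀ x ∈ range X,
      (∑ p ∈ range Y ×ˢ (univ : Finset (Fin 2)),
        if MemY l (x, p.1, p.2) ∧ t ≤ content σ (x, p.1, p.2) then 1 else 0)
      = (l.1.parts x - (t + (x : ℤ) - σ.1).toNat)
        + (l.2.parts x - (t + (x : ℤ) - σ.2).toNat) := by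
    intro x _
    rw [Finset.sum_product]
    have : ∀ y ∈ range Y,
        (∑ j : Fin 2, if MemY l (x, y, j) ∧ t ≤ content σ (x, y, j) then 1 else 0)
        = ((if y < l.1.parts x ∧ t ≤ (y : ℤ) - (x : ℤ) + σ.1 then 1 else 0)
          + if y < l.2.parts x ∧ t ≤ (y : ℤ) - (x : ℤ) + σ.2 then 1 else 0 : ℕ) := by
      intro y _
      rw [Fin.sum_univ_two]
      congr 1
      · simp only [hmem1]
      · simp only [hmem2]
    rw [Finset.sum_congr rfl this, Finset.sum_add_distrib,
      rowCard l.1 σ.1 t x Y hY1, rowCard l.2 σ.2 t x Y hY2]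
  rw [Finset.sum_congr rfl hrow, Finset.sum_add_distrib]

lemma key (l : Bipartition) (σ : ℤ × ℤ) (t : ℤ) (K X Y : ℕ) (U : ℤ)
    (hK : symCountGE l σ (t+1) ≤ K)
    (hU1 : (l.1.parts 0 : ℤ) + σ.1 ≤ U) (hU2 : (l.2.parts 0 : ℤ) + σ.2 ≤ U)
    (hX1 : ∀ x, X ≤ x → l.1.parts x = 0) (hX2 : ∀ x, X ≤ x → l.2.parts x = 0)
    (hXt1 : (l.1.parts 0 : ℤ) + σ.1 - t ≤ X) (hXt2 : (l.2.parts 0 : ℤ) + σ.2 - t ≤ X)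
    (hY1 : l.1.parts 0 ≤ Y) (hY2 : l.2.parts 0 ≤ Y) :
    ∑ k ∈ range K, (comp l σ k - t).toNat
      = Nat.card {b : Box // MemY l b ∧ t ≤ content σ b}
        + ((∑ x ∈ range X, (σ.1 - (x : ℤ) - t).toNat)
          + ∑ x ∈ range X, (σ.2 - (x : ℤ) - t).toNat) := by
  have stepA : ∑ k ∈ range K, (comp l σ k - t).toNat
      = ∑ u ∈ Finset.Ioc t U, symCountGE l σ u := by
    rw [swap_sum _ _ t U (fun k _ => comp_le_U l σ k U hU1 hU2)]
    refine Finset.sum_congr rfl (fun u hu => ?_)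
    rw [mem_Ioc] at hu
    exact comp_count l σ u K (le_trans (symCountGE_antitone l σ (by omega)) hK)
  have stepB : ∀ (p : NPartition) (c : ℤ), (p.parts 0 : ℤ) + c ≤ U →
      (p.parts 0 : ℤ) + c - t ≤ X → (∀ x, X ≤ x → p.parts x = 0) →
      ∑ u ∈ Finset.Ioc t U, betaCountGE p c u
        = ∑ x ∈ range X, (betaSet p c x - t).toNat := by
    intro p c hU hXt hX
    rw [swap_sum (betaSet p c) (range X) t U
      (fun x _ => le_trans (betaSet_le p c x) (by omega))]
    refine Finset.sum_congr rfl (fun u hu => ?_)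
    rw [mem_Ioc] at hu
    refine betaCountGE_eq_card p c u X (fun x hx => ?_)
    have h2 := hX x hx
    unfold betaSet
    omega
  have stepC : ∀ (p : NPartition) (c : ℤ),
      ∑ x ∈ range X, (betaSet p c x - t).toNat
        = (∑ x ∈ range X, (p.parts x - (t + (x : ℤ) - c).toNat))
          + ∑ x ∈ range X, (c - (x : ℤ) - t).toNat := by
    intro p c
    rw [← Finset.sum_add_distrib]
    refine Finset.sum_congr rfl (fun x _ => ?_)
    unfold betaSet
    omega
  have hsplit : ∑ u ∈ Finset.Ioc t U, symCountGE l σ u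
      = ∑ u ∈ Finset.Ioc t U, betaCountGE l.1 σ.1 u
        + ∑ u ∈ Finset.Ioc t U, betaCountGE l.2 σ.2 u := by
    rw [← Finset.sum_add_distrib]; rfl
  rw [stepA, hsplit, stepB l.1 σ.1 hU1 hXt1 hX1, stepB l.2 σ.2 hU2 hXt2 hX2,
    stepC, stepC, boxCard l σ t X Y hX1 hX2 hY1 hY2]
  omega

lemma half_lt_iff (t z : ℤ) : (t : ℝ) - 1/2 < (z : ℝ) ↔ t ≤ z := by
  constructor
  · intro h
    have h2 : (t : ℝ) < (z : ℝ) + 1 := by linarith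
    have h3 : t < z + 1 := by exact_mod_cast h2
    omega
  · intro h
    have : (t : ℝ) ≤ (z : ℝ) := by exact_mod_cast h
    linarith

lemma half_ne (t z : ℤ) : (z : ℝ) ≠ (t : ℝ) - 1/2 := by
  intro h
  have h2 : ((2*z : ℤ) : ℝ) = ((2*t - 1 : ℤ) : ℝ) := by push_cast; linarith
  have h3 : 2*z = 2*t - 1 := by exact_mod_cast h2
  omega

lemma dgCount_eq (d : ℕ) (hde : Even d) (sg : ℤ × ℤ) (l : Bipartition) (t : ℤ) :
    dgCount l (sg.1, sg.2 + (d : ℤ) / 2) d ((t : ℝ) - (d : ℝ)/2 - 1/2) 1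
      = Nat.card {b : Box // MemY l b ∧ t ≤ content sg b} := by
  obtain ⟨e, he⟩ := hde
  have hdi : (d : ℤ) / 2 = (e : ℤ) := by omega
  have hdr : (d : ℝ) = 2 * (e : ℝ) := by
    have : (d : ℤ) = 2 * e := by omega
    exact_mod_cast congrArg (Int.cast : ℤ → ℝ) this
  unfold dgCount
  apply Nat.card_congr
  apply Equiv.subtypeEquivRight
  rintro ⟨x, y, j⟩
  have main : ∀ (j : Fin 2),
      (((t : ℝ) - (d : ℝ)/2 - 1/2 < (content (sg.1, sg.2 + (d:ℤ)/2) (x,y,j) : ℝ)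
          - (jval (x,y,j) : ℝ) * (d : ℝ) / 2 ∨
        ((content (sg.1, sg.2 + (d:ℤ)/2) (x,y,j) : ℝ) - (jval (x,y,j) : ℝ) * (d : ℝ) / 2
            = (t : ℝ) - (d : ℝ)/2 - 1/2 ∧ jval (x,y,j) ≤ 1))
      ↔ t ≤ content sg (x,y,j)) := by
    intro j
    fin_cases j <;> simp only [Fin.zero_eta, Fin.mk_one, Fin.isValue]
    · have hc : content (sg.1, sg.2 + (d:ℤ)/2) (x,y,(0 : Fin 2))
          = content sg (x,y,(0:Fin 2)) := by
        simp [content, chargeOf]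
      have hj : jval (x,y,(0:Fin 2)) = 1 := rfl
      rw [hc, hj]
      set z := content sg (x,y,(0:Fin 2)) with hz
      rw [← half_lt_iff t z]
      push_cast
      constructor
      · rintro (h1 | ⟨h2, _⟩)
        · linarith
        · exact absurd (by linarith : (z:ℝ) = (t:ℝ) - 1/2) (half_ne t z)
      · intro h1
        left; linarith
    · have hc : content (sg.1, sg.2 + (d:ℤ)/2) (x,y,(1 : Fin 2))
          = content sg (x,y,(1:Fin 2)) + e := by
        simp [content, chargeOf, hdi]
        ring
      have hj : jval (x,y,(1:Fin 2)) = 2 := rfl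
      rw [hc, hj]
      set z := content sg (x,y,(1:Fin 2)) with hz
      rw [← half_lt_iff t z]
      push_cast
      rw [hdr]
      constructor
      · rintro (h1 | ⟨h2, _⟩)
        · linarith
        · exact absurd (by linarith : (z:ℝ) = (t:ℝ) - 1/2) (half_ne t z)
      · intro h1
        left; linarith
  rw [main j]

end Stmt0
end Stmt0Aux

/-- If `λ ⪯_s μ` in the Dunkl–Griffeth order, where `d` is a positive
even integer and `s = (σ₁, σ₂ + d/2)`, then for the charged symbols with charge `σ`
either `Λ ⊲ Λ'` or `Λ ≡ Λ'`. -/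
theorem decomposition_numbers_stmt0 (d : ℕ) (hd : 0 < d) (hde : Even d) (sg : ℤ × ℤ)
    (l m : Bipartition) (h : DGLE l m (sg.1, sg.2 + (d : ℤ) / 2) d) :
    DomLT l sg m sg ∨ comp l sg = comp m sg := by
  classical
  have hdom : DomLE l sg m sg := by
    intro K
    rcases Nat.eq_zero_or_pos K with rfl | hKpos
    · simp
    set t : ℤ := comp m sg (K - 1) with ht
    obtain ⟨X1, hX1⟩ := Stmt0.rows_bound l.1
    obtain ⟨X2, hX2⟩ := Stmt0.rows_bound l.2
    obtain ⟨X3, hX3⟩ := Stmt0.rows_bound m.1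
    obtain ⟨X4, hX4⟩ := Stmt0.rows_bound m.2
    set U : ℤ := max (max ((l.1.parts 0 : ℤ) + sg.1) ((l.2.parts 0 : ℤ) + sg.2))
        (max ((m.1.parts 0 : ℤ) + sg.1) ((m.2.parts 0 : ℤ) + sg.2)) with hU
    set X : ℕ := X1 + X2 + X3 + X4
        + ((l.1.parts 0 : ℤ) + sg.1 - t).toNat + ((l.2.parts 0 : ℤ) + sg.2 - t).toNat
        + ((m.1.parts 0 : ℤ) + sg.1 - t).toNat + ((m.2.parts 0 : ℤ) + sg.2 - t).toNat with hX
    set Y : ℕ := l.1.parts 0 + l.2.parts 0 + m.1.parts 0 + m.2.parts 0 with hY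
    set K' : ℕ := K + symCountGE l sg (t+1) + symCountGE m sg (t+1) with hK'
    have hkeyl := Stmt0.key l sg t K' X Y U (by omega)
      (le_trans (le_max_left _ _) (le_max_left _ _))
      (le_trans (le_max_right _ _) (le_max_left _ _))
      (fun x hx => hX1 x (by omega)) (fun x hx => hX2 x (by omega))
      (by omega) (by omega) (by omega) (by omega)
    have hkeym := Stmt0.key m sg t K' X Y U (by omega)
      (le_trans (le_max_left _ _) (le_max_right _ _))
      (le_trans (le_max_right _ _) (le_max_right _ _))
      (fun x hx => hX3 x (by omega)) (fun x hx => hX4 x (by omega))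
      (by omega) (by omega) (by omega) (by omega)
    have hbox := h ((t : ℝ) - (d : ℝ)/2 - 1/2) 1 (Or.inl rfl)
    rw [Stmt0.dgCount_eq d hde sg l t, Stmt0.dgCount_eq d hde sg m t] at hbox
    have hsum : ∑ k ∈ Finset.range K', (comp l sg k - t).toNat
        ≤ ∑ k ∈ Finset.range K', (comp m sg k - t).toNat := by
      rw [hkeyl, hkeym]
      omega
    have hKK' : K ≤ K' := by omega
    -- partial sum of m equals K*t plus the truncated positive parts
    have hM : ((∑ k ∈ Finset.range K', (comp m sg k - t).toNat : ℕ) : ℤ)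
        = ∑ k ∈ Finset.range K, comp m sg k - (K : ℤ) * t := by
      have hsplit : ∑ k ∈ Finset.range K', ((comp m sg k - t).toNat : ℤ)
          = ∑ k ∈ Finset.range K, ((comp m sg k - t).toNat : ℤ)
            + ∑ k ∈ Finset.Ico K K', ((comp m sg k - t).toNat : ℤ) :=
        (Finset.sum_range_add_sum_Ico _ hKK').symm
      have hzero : ∑ k ∈ Finset.Ico K K', ((comp m sg k - t).toNat : ℤ) = 0 := by
        refine Finset.sum_eq_zero (fun k hk => ?_)
        rw [Finset.mem_Ico] at hk
        have hle : comp m sg k ≤ t := by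
          rw [ht]; exact Stmt0.comp_antitone m sg (by omega)
        omega
      have hfirst : ∑ k ∈ Finset.range K, ((comp m sg k - t).toNat : ℤ)
          = ∑ k ∈ Finset.range K, (comp m sg k - t) := by
        refine Finset.sum_congr rfl (fun k hk => ?_)
        rw [Finset.mem_range] at hk
        have hge : t ≤ comp m sg k := by
          rw [ht]; exact Stmt0.comp_antitone m sg (by omega)
        omega
      push_cast
      rw [hsplit, hzero, hfirst, Finset.sum_sub_distrib, Finset.sum_const,
        Finset.card_range]
      push_cast
      ring
    have hL : ∑ k ∈ Finset.range K, comp l sg k - (K : ℤ) * t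
        ≤ ((∑ k ∈ Finset.range K', (comp l sg k - t).toNat : ℕ) : ℤ) := by
      have h1 : ∑ k ∈ Finset.range K, comp l sg k - (K : ℤ) * t
          = ∑ k ∈ Finset.range K, (comp l sg k - t) := by
        rw [Finset.sum_sub_distrib, Finset.sum_const, Finset.card_range]
        push_cast
        ring
      have h2 : ∑ k ∈ Finset.range K, (comp l sg k - t)
          ≤ ∑ k ∈ Finset.range K, ((comp l sg k - t).toNat : ℤ) :=
        Finset.sum_le_sum (fun k _ => Int.self_le_toNat _)
      have h3 : ∑ k ∈ Finset.range K, ((comp l sg k - t).toNat : ℤ)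
          ≤ ∑ k ∈ Finset.range K', ((comp l sg k - t).toNat : ℤ) := by
        refine Finset.sum_le_sum_of_subset_of_nonneg
          (Finset.range_subset_range.mpr hKK') (fun k _ _ => by positivity)
      push_cast
      omega
    have hcast : ((∑ k ∈ Finset.range K', (comp l sg k - t).toNat : ℕ) : ℤ)
        ≤ ((∑ k ∈ Finset.range K', (comp m sg k - t).toNat : ℕ) : ℤ) := by
      exact_mod_cast hsum
    omega
  by_cases hc : comp l sg = comp m sg
  · right; exact hc
  · left; exact ⟨hc, hdom⟩
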